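/- Iwasawa-type decomposition: every X = [[A,B],[C,D]] ∈ Sp(2d,ℝ) factors as X = [[L, 0], [PL, L^{-1}]] · R where L = (AAᵀ + BBᵀ)^{1/2}, P = (CAᵀ + DBᵀ)(AAᵀ + BBᵀ)^{-1} is symmetric, and R ∈ Sp(2d,ℝ) ∩ O(2d). -/

import Mathlib

open Matrix

/-- Iwasawa-type decomposition: every X = [[A,B],[C,D]] ∈ Sp(2d,ℝ)
factors as X = [[L,0],[PL,L⁻¹]] · R where L = (AAᵀ + BBᵀ)^{1/2} (the positive-definite
square root), P = (CAᵀ + DBᵀ)(AAᵀ + BBᵀ)⁻¹ is symmetric, and R ∈ Sp(2d,ℝ) ∩ O(2d). -/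
theorem stmt9 (d : ℕ) (A B C D : Matrix (Fin d) (Fin d) ℝ)
    (J : Matrix (Fin d ⊕ Fin d) (Fin d ⊕ Fin d) ℝ) (hJ : J = Matrix.fromBlocks 0 1 (-1) 0)
    (hS : (Matrix.fromBlocks A B C D)ᵀ * J * (Matrix.fromBlocks A B C D) = J)
    (L : Matrix (Fin d) (Fin d) ℝ) (hL : L.PosDef) (hLsq : L * L = A * Aᵀ + B * Bᵀ)
    (P : Matrix (Fin d) (Fin d) ℝ)
    (hP : P = (C * Aᵀ + D * Bᵀ) * (A * Aᵀ + B * Bᵀ)⁻¹) :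
    Pᵀ = P ∧
    ∃ R : Matrix (Fin d ⊕ Fin d) (Fin d ⊕ Fin d) ℝ,
      (Rᵀ * J * R = J ∧ Rᵀ * R = 1) ∧
      Matrix.fromBlocks A B C D = Matrix.fromBlocks L 0 (P * L) L⁻¹ * R := by
  subst hJ
  set M : Matrix (Fin d) (Fin d) ℝ := A * Aᵀ + B * Bᵀ with hM
  -- block identities from symplecticity
  have e11 := congrArg Matrix.toBlocks₁₁ hS
  have e12 := congrArg Matrix.toBlocks₁₂ hS
  have e21 := congrArg Matrix.toBlocks₂₁ hS
  have e22 := congrArg Matrix.toBlocks₂₂ hS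
  simp only [fromBlocks_transpose, fromBlocks_multiply, toBlocks_fromBlocks₁₁,
    toBlocks_fromBlocks₁₂, toBlocks_fromBlocks₂₁, toBlocks_fromBlocks₂₂,
    Matrix.mul_one, Matrix.mul_neg, Matrix.mul_zero, Matrix.zero_mul, Matrix.one_mul,
    Matrix.neg_mul, add_zero, zero_add, mul_one, mul_zero] at e11 e12 e21 e22
  have h1 : Aᵀ * C = Cᵀ * A := by
    have := e11; rwa [neg_add_eq_sub, sub_eq_zero] at this
  have h2 : Aᵀ * D = 1 + Cᵀ * B := by
    have := e12; rw [neg_add_eq_sub, sub_eq_iff_eq_add] at this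
    exact this
  have h3 : Dᵀ * A = 1 + Bᵀ * C := by
    have := e21
    rw [neg_add_eq_sub, sub_eq_iff_eq_add] at this
    rw [this]; abel
  have h4 : Bᵀ * D = Dᵀ * B := by
    have := e22; rw [neg_add_eq_sub, sub_eq_zero] at this
    exact this
  -- X J Xᵀ = J consequences
  have hXJX : Matrix.fromBlocks A B C D *
      (Matrix.fromBlocks 0 (-1) 1 0 : Matrix (Fin d ⊕ Fin d) (Fin d ⊕ Fin d) ℝ) *
      (Matrix.fromBlocks A B C D)ᵀ = Matrix.fromBlocks 0 (-1) 1 0 := by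
    set K : Matrix (Fin d ⊕ Fin d) (Fin d ⊕ Fin d) ℝ := Matrix.fromBlocks 0 (-1) 1 0 with hKdef
    set J : Matrix (Fin d ⊕ Fin d) (Fin d ⊕ Fin d) ℝ := Matrix.fromBlocks 0 1 (-1) 0 with hJdef
    set X : Matrix (Fin d ⊕ Fin d) (Fin d ⊕ Fin d) ℝ := Matrix.fromBlocks A B C D with hXdef
    have hK : K * J = 1 := by
      rw [hKdef, hJdef]; simp [fromBlocks_multiply, ← fromBlocks_one]
    have hK' : J * K = 1 := by
      rw [hKdef, hJdef]; simp [fromBlocks_multiply, ← fromBlocks_one]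
    have hXl : (K * Xᵀ * J) * X = 1 := by
      calc (K * Xᵀ * J) * X = K * (Xᵀ * J * X) := by simp only [Matrix.mul_assoc]
        _ = 1 := by rw [hS, hK]
    have hXr := mul_eq_one_comm.mp hXl
    have : X * K * Xᵀ * (J * K) = 1 * K := by
      rw [show X * K * Xᵀ * (J * K) = X * (K * Xᵀ * J) * K by simp only [Matrix.mul_assoc],
        Matrix.mul_assoc X, ← Matrix.mul_assoc X, hXr]
    rwa [hK', Matrix.mul_one, one_mul] at this
  have k1 : A * Bᵀ = B * Aᵀ := by
    have := congrArg Matrix.toBlocks₁₁ hXJX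
    simp only [fromBlocks_transpose, fromBlocks_multiply, toBlocks_fromBlocks₁₁,
      Matrix.mul_one, Matrix.mul_neg, Matrix.mul_zero, Matrix.zero_mul, Matrix.one_mul,
      Matrix.neg_mul, add_zero, zero_add] at this
    rw [add_neg_eq_zero] at this
    exact this.symm
  -- facts about L and M
  have hLt : Lᵀ = L := by
    have := hL.isHermitian
    rwa [Matrix.IsHermitian, Matrix.conjTranspose_eq_transpose_of_trivial] at this
  have hLd : IsUnit L.det := isUnit_iff_ne_zero.mpr (ne_of_gt hL.det_pos)
  have hLL : L * L⁻¹ = 1 := Matrix.mul_nonsing_inv _ hLd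
  have hLL' : L⁻¹ * L = 1 := Matrix.nonsing_inv_mul _ hLd
  have hLit : L⁻¹ᵀ = L⁻¹ := by rw [Matrix.transpose_nonsing_inv, hLt]
  have hMd : IsUnit M.det := by
    rw [← hLsq, Matrix.det_mul]; exact hLd.mul hLd
  have hMM : M * M⁻¹ = 1 := Matrix.mul_nonsing_inv _ hMd
  have hMM' : M⁻¹ * M = 1 := Matrix.nonsing_inv_mul _ hMd
  have hMinv : M⁻¹ = L⁻¹ * L⁻¹ := by rw [← hLsq, Matrix.mul_inv_rev]
  -- P symmetry
  have hN : M * (C * Aᵀ + D * Bᵀ) = (A * Cᵀ + B * Dᵀ) * M := by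
    have e : M * (C * Aᵀ + D * Bᵀ)
        = A * (Aᵀ * C) * Aᵀ + A * (Aᵀ * D) * Bᵀ
          + B * (Bᵀ * C) * Aᵀ + B * (Bᵀ * D) * Bᵀ := by
      rw [hM]; noncomm_ring
    have h3' : Bᵀ * C = Dᵀ * A - 1 := by rw [h3]; abel
    rw [e, h1, h2, h3', h4]
    have e2 : A * (Cᵀ * A) * Aᵀ + A * (1 + Cᵀ * B) * Bᵀ
        + B * (Dᵀ * A - 1) * Aᵀ + B * (Dᵀ * B) * Bᵀ
        = (A * Cᵀ + B * Dᵀ) * M + (A * Bᵀ - B * Aᵀ) := by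
      rw [hM]; noncomm_ring
    rw [e2, k1, sub_self, add_zero]
  have hP2 : (C * Aᵀ + D * Bᵀ) * M⁻¹ = M⁻¹ * (A * Cᵀ + B * Dᵀ) := by
    calc (C * Aᵀ + D * Bᵀ) * M⁻¹
        = M⁻¹ * (M * (C * Aᵀ + D * Bᵀ)) * M⁻¹ := by
          rw [← Matrix.mul_assoc, hMM', one_mul]
      _ = M⁻¹ * ((A * Cᵀ + B * Dᵀ) * M) * M⁻¹ := by rw [hN]
      _ = M⁻¹ * (A * Cᵀ + B * Dᵀ) := by
          rw [Matrix.mul_assoc M⁻¹, Matrix.mul_assoc, hMM, Matrix.mul_one]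
  have hPsym : Pᵀ = P := by
    rw [hP, Matrix.transpose_mul, Matrix.transpose_add, Matrix.transpose_mul,
      Matrix.transpose_mul, Matrix.transpose_transpose, Matrix.transpose_transpose,
      Matrix.transpose_nonsing_inv]
    rw [show Mᵀ = M from by rw [hM]; simp [Matrix.transpose_add, Matrix.transpose_mul]]
    rw [← hP2]
  have hMP : M * P = A * Cᵀ + B * Dᵀ := by
    rw [hP, hP2, ← Matrix.mul_assoc, hMM, one_mul]
  -- recover C and D
  have hC : C = P * A - M⁻¹ * B := by
    have cancel : M * C = M * (P * A - M⁻¹ * B) := by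
      have : M * (P * A - M⁻¹ * B) = (M * P) * A - (M * M⁻¹) * B := by noncomm_ring
      rw [this, hMP, hMM, one_mul]
      have e : (A * Cᵀ + B * Dᵀ) * A - B
          = A * (Cᵀ * A) + B * (Dᵀ * A) - B := by noncomm_ring
      rw [e, ← h1, h3, hM]
      noncomm_ring
    calc C = M⁻¹ * (M * C) := by rw [← Matrix.mul_assoc, hMM', one_mul]
      _ = M⁻¹ * (M * (P * A - M⁻¹ * B)) := by rw [cancel]
      _ = P * A - M⁻¹ * B := by rw [← Matrix.mul_assoc, hMM', one_mul]
  have hD : D = P * B + M⁻¹ * A := by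
    have cancel : M * D = M * (P * B + M⁻¹ * A) := by
      have : M * (P * B + M⁻¹ * A) = (M * P) * B + (M * M⁻¹) * A := by noncomm_ring
      rw [this, hMP, hMM, one_mul]
      have e : (A * Cᵀ + B * Dᵀ) * B + A
          = A * (Cᵀ * B) + B * (Dᵀ * B) + A := by noncomm_ring
      have h2' : Cᵀ * B = Aᵀ * D - 1 := by rw [h2]; abel
      rw [e, h2', ← h4, hM]
      noncomm_ring
    calc D = M⁻¹ * (M * D) := by rw [← Matrix.mul_assoc, hMM', one_mul]
      _ = M⁻¹ * (M * (P * B + M⁻¹ * A)) := by rw [cancel]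
      _ = P * B + M⁻¹ * A := by rw [← Matrix.mul_assoc, hMM', one_mul]
  have hUUt : (L⁻¹ * A) * (L⁻¹ * A)ᵀ + (L⁻¹ * B) * (L⁻¹ * B)ᵀ = 1 := by
    rw [Matrix.transpose_mul, Matrix.transpose_mul, hLit]
    have e : L⁻¹ * A * (Aᵀ * L⁻¹) + L⁻¹ * B * (Bᵀ * L⁻¹)
        = L⁻¹ * (A * Aᵀ + B * Bᵀ) * L⁻¹ := by noncomm_ring
    rw [e, ← hM, ← hLsq]
    calc L⁻¹ * (L * L) * L⁻¹ = (L⁻¹ * L) * (L * L⁻¹) := by noncomm_ring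
      _ = 1 := by rw [hLL', hLL, one_mul]
  have hUVt : (L⁻¹ * A) * (L⁻¹ * B)ᵀ = (L⁻¹ * B) * (L⁻¹ * A)ᵀ := by
    rw [Matrix.transpose_mul, Matrix.transpose_mul, hLit]
    calc L⁻¹ * A * (Bᵀ * L⁻¹) = L⁻¹ * (A * Bᵀ) * L⁻¹ := by noncomm_ring
      _ = L⁻¹ * (B * Aᵀ) * L⁻¹ := by rw [k1]
      _ = L⁻¹ * B * (Aᵀ * L⁻¹) := by noncomm_ring
  set R : Matrix (Fin d ⊕ Fin d) (Fin d ⊕ Fin d) ℝ :=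
    Matrix.fromBlocks (L⁻¹ * A) (L⁻¹ * B) (-(L⁻¹ * B)) (L⁻¹ * A) with hR
  have hRR : R * Rᵀ = 1 := by
    rw [hR, fromBlocks_transpose, fromBlocks_multiply, ← fromBlocks_one]
    rw [fromBlocks_inj]
    refine ⟨?_, ?_, ?_, ?_⟩
    · exact hUUt
    · rw [Matrix.transpose_neg, Matrix.mul_neg, hUVt]
      exact neg_add_cancel _
    · rw [Matrix.neg_mul, hUVt]
      exact neg_add_cancel _
    · rw [Matrix.transpose_neg, Matrix.mul_neg, Matrix.neg_mul, neg_neg, add_comm]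
      exact hUUt
  have hRtR : Rᵀ * R = 1 := mul_eq_one_comm.mp hRR
  refine ⟨hPsym, R, ⟨?_, hRtR⟩, ?_⟩
  · have hcomm : (Matrix.fromBlocks 0 1 (-1) 0 : Matrix (Fin d ⊕ Fin d) (Fin d ⊕ Fin d) ℝ) * R
        = R * Matrix.fromBlocks 0 1 (-1) 0 := by
      rw [hR]
      simp [fromBlocks_multiply]
    calc Rᵀ * Matrix.fromBlocks 0 1 (-1) 0 * R
        = Rᵀ * (R * Matrix.fromBlocks 0 1 (-1) 0) := by rw [Matrix.mul_assoc, hcomm]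
      _ = Matrix.fromBlocks 0 1 (-1) 0 := by rw [← Matrix.mul_assoc, hRtR, one_mul]
  · rw [hR, fromBlocks_multiply, fromBlocks_inj]
    refine ⟨?_, ?_, ?_, ?_⟩
    · rw [Matrix.zero_mul, add_zero, ← Matrix.mul_assoc, hLL, one_mul]
    · rw [Matrix.zero_mul, add_zero, ← Matrix.mul_assoc, hLL, one_mul]
    · rw [hC]
      have e : P * L * (L⁻¹ * A) + L⁻¹ * (-(L⁻¹ * B))
          = P * (L * L⁻¹) * A - L⁻¹ * L⁻¹ * B := by noncomm_ring
      rw [e, hLL, Matrix.mul_one, ← hMinv]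
    · rw [hD]
      have e : P * L * (L⁻¹ * B) + L⁻¹ * (L⁻¹ * A)
          = P * (L * L⁻¹) * B + L⁻¹ * L⁻¹ * A := by noncomm_ring
      rw [e, hLL, Matrix.mul_one, ← hMinv]
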